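/- Let G be a loopless digraph on n vertices, let G° be G with a loop added on every vertex, and let I_k(G) denote the number of in-dominating sets of G of size k. Then for every q ≥ 2, the maximum number of fixed points over all coding functions f over an alphabet of size q with interaction graph exactly G° equals Σ_{k=0}^{n} (q−1)^k · I_k(G); that is, h(G°,q) = log_q Σ_k (q−1)^k I_k(G). -/

import Mathlib

/-- Arc `(u,i)` of the interaction graph of a coding function `f`. -/
def arcCF {V A : Type*} [DecidableEq V] (f : (V → A) → V → A) (u i : V) : Prop :=
  ∃ (x : V → A) (a : A), f (Function.update x u a) i ≠ f x i

/-- `X` is an in-dominating set of the loopless digraph `G`: every vertex `v` with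
positive in-degree is in `X` or has an in-neighbour in `X`. -/
def IsIDS {V : Type*} (G : V → V → Prop) (X : Finset V) : Prop :=
  ∀ v : V, (∃ u, G u v) → v ∈ X ∨ ∃ u ∈ X, G u v


open Finset

section Sub
variable {α : Type*} [DecidableEq α]

lemma card_union_union_le (X Y Z : Finset α) :
    (X ∪ (Y ∪ Z)).card + X.card ≤ (X ∪ Y).card + (X ∪ Z).card := by
  have h := Finset.card_union_add_card_inter (X ∪ Y) (X ∪ Z)
  have h1 : (X ∪ Y) ∪ (X ∪ Z) = X ∪ (Y ∪ Z) := by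
    ext a; simp [or_assoc, or_left_comm, or_comm]
  have h2 : X ⊆ (X ∪ Y) ∩ (X ∪ Z) := by intro a ha; simp [ha]
  calc (X ∪ (Y ∪ Z)).card + X.card
      ≤ ((X ∪ Y) ∪ (X ∪ Z)).card + ((X ∪ Y) ∩ (X ∪ Z)).card := by
        rw [h1]; exact Nat.add_le_add_left (Finset.card_le_card h2) _
    _ = (X ∪ Y).card + (X ∪ Z).card := h

lemma card_union_biUnion_le {ι : Type*} [DecidableEq ι] (X : Finset α) (Y : ι → Finset α)
    (s : Finset ι) (hs : s.Nonempty) :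
    (X ∪ s.biUnion Y).card + (s.card - 1) * X.card ≤ ∑ a ∈ s, (X ∪ Y a).card := by
  induction hs using Finset.Nonempty.cons_induction with
  | singleton a => simp
  | cons a s ha hs ih =>
      rw [Finset.cons_eq_insert, Finset.biUnion_insert, Finset.sum_insert ha, Finset.card_insert_of_notMem ha]
      have h1 := card_union_union_le X (Y a) (s.biUnion Y)
      have hsc : 1 ≤ s.card := Finset.card_pos.mpr hs
      calc (X ∪ (Y a ∪ s.biUnion Y)).card + (s.card + 1 - 1) * X.card
          = ((X ∪ (Y a ∪ s.biUnion Y)).card + X.card) + (s.card - 1) * X.card := by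
            have : s.card + 1 - 1 = (s.card - 1) + 1 := by omega
            rw [this]; ring
        _ ≤ ((X ∪ Y a).card + (X ∪ s.biUnion Y).card) + (s.card - 1) * X.card := by
            exact Nat.add_le_add_right h1 _
        _ = (X ∪ Y a).card + ((X ∪ s.biUnion Y).card + (s.card - 1) * X.card) := by ring
        _ ≤ (X ∪ Y a).card + ∑ b ∈ s, (X ∪ Y b).card := Nat.add_le_add_left ih _

end Sub

section Shift

variable {V : Type*} [Fintype V] [DecidableEq V] {q : ℕ}

open Classical in
/-- The set of configurations violating at least one pattern constraint. -/
noncomputable def BadSet (P : Finset V) (T : V → Finset V) (p : V → V → Fin q) :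
    Finset (V → Fin q) :=
  univ.filter (fun x => ∃ v ∈ P, ∀ w ∈ T v, x w = p v w)

open Classical in
noncomputable def Layer (w : V) (a : Fin q) : Finset (V → Fin q) :=
  univ.filter (fun x => x w = a)

def IsCyl (w : V) (S : Finset (V → Fin q)) : Prop :=
  ∀ x a, x ∈ S → Function.update x w a ∈ S

lemma cyl_union {w : V} {S S' : Finset (V → Fin q)} (h : IsCyl w S) (h' : IsCyl w S') :
    IsCyl w (S ∪ S') := by
  intro x a hx
  rcases Finset.mem_union.mp hx with hx | hx
  · exact Finset.mem_union_left _ (h x a hx)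
  · exact Finset.mem_union_right _ (h' x a hx)

lemma cyl_biUnion {w : V} {ι : Type*} [DecidableEq ι] {s : Finset ι} {Y : ι → Finset (V → Fin q)}
    (h : ∀ i ∈ s, IsCyl w (Y i)) : IsCyl w (s.biUnion Y) := by
  intro x a hx
  rcases Finset.mem_biUnion.mp hx with ⟨i, hi, hxi⟩
  exact Finset.mem_biUnion.mpr ⟨i, hi, h i hi x a hxi⟩

lemma card_inter_layer {w : V} {S : Finset (V → Fin q)} (hS : IsCyl w S) (a b : Fin q) :
    (S ∩ Layer w a).card = (S ∩ Layer w b).card := by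
  classical
  apply Finset.card_bij' (fun x _ => Function.update x w b) (fun x _ => Function.update x w a)
  · intro x hx
    rcases Finset.mem_inter.mp hx with ⟨h1, h2⟩
    have hxw : x w = a := by simpa [Layer] using h2
    funext u
    by_cases hu : u = w <;> simp [Function.update, hu, hxw]
    subst hu; exact hxw.symm
  · intro x hx
    rcases Finset.mem_inter.mp hx with ⟨h1, h2⟩
    have hxw : x w = b := by simpa [Layer] using h2
    funext u
    by_cases hu : u = w <;> simp [Function.update, hu, hxw]
    subst hu; exact hxw.symm
  · intro x hx
    rcases Finset.mem_inter.mp hx with ⟨h1, h2⟩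
    refine Finset.mem_inter.mpr ⟨hS x b h1, ?_⟩
    simp [Layer]
  · intro x hx
    rcases Finset.mem_inter.mp hx with ⟨h1, h2⟩
    refine Finset.mem_inter.mpr ⟨hS x a h1, ?_⟩
    simp [Layer]

end Shift

section Shift2

variable {V : Type*} [Fintype V] [DecidableEq V] {q : ℕ}

lemma inter_layer_eq_filter (s : Finset (V → Fin q)) (w : V) (a : Fin q) :
    s ∩ Layer w a = s.filter (fun x => x w = a) := by
  classical
  ext x; simp [Layer, Finset.mem_filter, Finset.mem_inter, and_comm]

/-- zeroing out all the patterns at coordinate `w` does not increase the bad set. -/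
lemma badset_shift_le [NeZero q] (P : Finset V) (T : V → Finset V) (p : V → V → Fin q) (w : V) :
    (BadSet P T (fun v u => if u = w then 0 else p v u)).card ≤ (BadSet P T p).card := by
  classical
  set p' : V → V → Fin q := fun v u => if u = w then 0 else p v u with hp'
  set X : Finset (V → Fin q) :=
    univ.filter (fun x => ∃ v ∈ P, w ∉ T v ∧ ∀ u ∈ T v, x u = p v u) with hX
  set Y : Fin q → Finset (V → Fin q) := fun a =>
    univ.filter (fun x => ∃ v ∈ P, w ∈ T v ∧ p v w = a ∧ ∀ u ∈ (T v).erase w, x u = p v u)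
    with hY
  have hXcyl : IsCyl w X := by
    intro x a hx
    simp only [hX, Finset.mem_filter, Finset.mem_univ, true_and] at hx ⊢
    obtain ⟨v, hv, hw, hag⟩ := hx
    refine ⟨v, hv, hw, fun u hu => ?_⟩
    rw [Function.update_of_ne (by rintro rfl; exact hw hu)]
    exact hag u hu
  have hYcyl : ∀ a, IsCyl w (Y a) := by
    intro a x b hx
    simp only [hY, Finset.mem_filter, Finset.mem_univ, true_and] at hx ⊢
    obtain ⟨v, hv, hw, hpa, hag⟩ := hx
    refine ⟨v, hv, hw, hpa, fun u hu => ?_⟩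
    have huw : u ≠ w := (Finset.mem_erase.mp hu).1
    rw [Function.update_of_ne huw]
    exact hag u hu
  -- decomposition of BadSet p in each layer
  have hA : ∀ a : Fin q, BadSet P T p ∩ Layer w a = (X ∪ Y a) ∩ Layer w a := by
    intro a
    ext x
    simp only [BadSet, Finset.mem_inter, Finset.mem_union, Finset.mem_filter, Finset.mem_univ,
      true_and, hX, hY, Layer]
    constructor
    · rintro ⟨⟨v, hv, hag⟩, hxw⟩
      refine ⟨?_, hxw⟩
      by_cases hw : w ∈ T v
      · right
        exact ⟨v, hv, hw, by rw [← hag w hw]; exact hxw,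
          fun u hu => hag u (Finset.mem_of_mem_erase hu)⟩
      · left; exact ⟨v, hv, hw, hag⟩
    · rintro ⟨h, hxw⟩
      refine ⟨?_, hxw⟩
      rcases h with ⟨v, hv, _, hag⟩ | ⟨v, hv, hw, hpa, hag⟩
      · exact ⟨v, hv, hag⟩
      · refine ⟨v, hv, fun u hu => ?_⟩
        by_cases huw : u = w
        · subst huw; rw [hxw, hpa]
        · exact hag u (Finset.mem_erase.mpr ⟨huw, hu⟩)
  have hB0 : BadSet P T p' ∩ Layer w 0 = (X ∪ univ.biUnion Y) ∩ Layer w 0 := by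
    ext x
    simp only [BadSet, Finset.mem_inter, Finset.mem_union, Finset.mem_biUnion, Finset.mem_filter,
      Finset.mem_univ, true_and, hX, hY, Layer, hp']
    constructor
    · rintro ⟨⟨v, hv, hag⟩, hxw⟩
      refine ⟨?_, hxw⟩
      by_cases hw : w ∈ T v
      · right
        refine ⟨p v w, v, hv, hw, rfl, fun u hu => ?_⟩
        have huw : u ≠ w := (Finset.mem_erase.mp hu).1
        have := hag u (Finset.mem_of_mem_erase hu)
        simpa [huw] using this
      · left
        refine ⟨v, hv, hw, fun u hu => ?_⟩
        have huw : u ≠ w := by rintro rfl; exact hw hu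
        simpa [huw] using hag u hu
    · rintro ⟨h, hxw⟩
      refine ⟨?_, hxw⟩
      rcases h with ⟨v, hv, hw, hag⟩ | ⟨a, v, hv, hw, hpa, hag⟩
      · refine ⟨v, hv, fun u hu => ?_⟩
        have huw : u ≠ w := by rintro rfl; exact hw hu
        simpa [huw] using hag u hu
      · refine ⟨v, hv, fun u hu => ?_⟩
        by_cases huw : u = w
        · subst huw; simpa using hxw
        · simpa [huw] using hag u (Finset.mem_erase.mpr ⟨huw, hu⟩)
  have hBa : ∀ a : Fin q, a ≠ 0 → BadSet P T p' ∩ Layer w a = X ∩ Layer w a := by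
    intro a ha
    ext x
    simp only [BadSet, Finset.mem_inter, Finset.mem_filter, Finset.mem_univ, true_and,
      hX, Layer, hp']
    constructor
    · rintro ⟨⟨v, hv, hag⟩, hxw⟩
      refine ⟨?_, hxw⟩
      by_cases hw : w ∈ T v
      · exfalso
        have := hag w hw
        simp only [if_pos rfl] at this
        rw [hxw] at this
        exact ha this
      · refine ⟨v, hv, hw, fun u hu => ?_⟩
        have huw : u ≠ w := by rintro rfl; exact hw hu
        simpa [huw] using hag u hu
    · rintro ⟨⟨v, hv, hw, hag⟩, hxw⟩
      refine ⟨⟨v, hv, fun u hu => ?_⟩, hxw⟩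
      have huw : u ≠ w := by rintro rfl; exact hw hu
      simpa [huw] using hag u hu
  -- layer counting
  have hcard : ∀ (s : Finset (V → Fin q)), s.card = ∑ a : Fin q, (s ∩ Layer w a).card := by
    intro s
    rw [Finset.card_eq_sum_card_fiberwise (f := fun x => x w) (t := univ)
      (fun x _ => Finset.mem_univ _)]
    exact Finset.sum_congr rfl fun a _ => by rw [inter_layer_eq_filter]
  rw [hcard (BadSet P T p'), hcard (BadSet P T p)]
  -- rewrite each side
  have hq0 : (0 : Fin q) ∈ (univ : Finset (Fin q)) := Finset.mem_univ _
  rw [← Finset.add_sum_erase _ _ hq0, hB0]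
  have hrest : ∑ a ∈ univ.erase (0 : Fin q), (BadSet P T p' ∩ Layer w a).card
      = (q - 1) * (X ∩ Layer w 0).card := by
    rw [Finset.sum_congr rfl (fun a ha => by
      rw [hBa a (Finset.mem_erase.mp ha).1, card_inter_layer hXcyl a 0])]
    rw [Finset.sum_const, Finset.card_erase_of_mem hq0, Finset.card_univ, Fintype.card_fin,
      smul_eq_mul]
  rw [hrest]
  have hXY : ∀ a, ((X ∪ Y a) ∩ Layer w a).card = ((X ∩ Layer w 0) ∪ (Y a ∩ Layer w 0)).card := by
    intro a
    rw [card_inter_layer (cyl_union hXcyl (hYcyl a)) a 0, Finset.union_inter_distrib_right]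
  have hXbY : ((X ∪ univ.biUnion Y) ∩ Layer w 0).card
      = ((X ∩ Layer w 0) ∪ univ.biUnion (fun a => Y a ∩ Layer w 0)).card := by
    rw [Finset.union_inter_distrib_right]
    congr 2
    ext x; simp [Finset.mem_biUnion, Finset.mem_inter, and_comm]
  rw [hXbY]
  have key := card_union_biUnion_le (X ∩ Layer w 0) (fun a => Y a ∩ Layer w 0)
      (univ : Finset (Fin q)) (Finset.univ_nonempty)
  rw [Finset.card_univ, Fintype.card_fin] at key
  calc ((X ∩ Layer w 0) ∪ univ.biUnion fun a => Y a ∩ Layer w 0).card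
        + (q - 1) * (X ∩ Layer w 0).card
      ≤ ∑ a : Fin q, ((X ∩ Layer w 0) ∪ (Y a ∩ Layer w 0)).card := by
        have : (q - 1) * (X ∩ Layer w 0).card = (q - 1) * (X ∩ Layer w 0).card := rfl
        simpa [mul_comm] using key
    _ = ∑ a : Fin q, (BadSet P T p ∩ Layer w a).card := by
        refine Finset.sum_congr rfl fun a _ => ?_
        rw [hA a, hXY a]

end Shift2

section Shift3

variable {V : Type*} [Fintype V] [DecidableEq V] {q : ℕ}

lemma badset_congr (P : Finset V) (T : V → Finset V) (p p2 : V → V → Fin q)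
    (h : ∀ v ∈ P, ∀ u ∈ T v, p v u = p2 v u) : BadSet P T p = BadSet P T p2 := by
  classical
  ext x
  simp only [BadSet, Finset.mem_filter, Finset.mem_univ, true_and]
  constructor
  · rintro ⟨v, hv, hag⟩
    exact ⟨v, hv, fun u hu => by rw [hag u hu, h v hv u hu]⟩
  · rintro ⟨v, hv, hag⟩
    exact ⟨v, hv, fun u hu => by rw [hag u hu, h v hv u hu]⟩

lemma badset_zero_le [NeZero q] (P : Finset V) (T : V → Finset V) (p : V → V → Fin q) :
    (BadSet P T (fun _ _ => (0 : Fin q))).card ≤ (BadSet P T p).card := by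
  classical
  suffices H : ∀ (n : ℕ) (p : V → V → Fin q),
      (∑ v ∈ P, ((T v).filter (fun u => p v u ≠ 0)).card) ≤ n →
      (BadSet P T (fun _ _ => (0 : Fin q))).card ≤ (BadSet P T p).card by
    exact H _ p le_rfl
  intro n
  induction n with
  | zero =>
      intro p hp
      have hall : ∀ v ∈ P, ∀ u ∈ T v, p v u = 0 := by
        intro v hv u hu
        by_contra hne
        have h1 : u ∈ (T v).filter (fun u => p v u ≠ 0) := Finset.mem_filter.mpr ⟨hu, hne⟩
        have h2 : 0 < ((T v).filter (fun u => p v u ≠ 0)).card := Finset.card_pos.mpr ⟨u, h1⟩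
        have h3 : 0 < ∑ v ∈ P, ((T v).filter (fun u => p v u ≠ 0)).card := by
          calc 0 < ((T v).filter (fun u => p v u ≠ 0)).card := h2
            _ ≤ _ := Finset.single_le_sum (f := fun v => ((T v).filter (fun u => p v u ≠ 0)).card) (fun _ _ => Nat.zero_le _) hv
        omega
      rw [badset_congr P T p (fun _ _ => 0) hall]
  | succ n ih =>
      intro p hp
      by_cases h0 : (∑ v ∈ P, ((T v).filter (fun u => p v u ≠ 0)).card) ≤ n
      · exact ih p h0
      · -- there is a nonzero entry
        have hpos : 0 < ∑ v ∈ P, ((T v).filter (fun u => p v u ≠ 0)).card := by omega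
        obtain ⟨v₀, hv₀, hne⟩ : ∃ v₀ ∈ P, ((T v₀).filter (fun u => p v₀ u ≠ 0)).Nonempty := by
          by_contra hc
          push_neg at hc
          have : ∑ v ∈ P, ((T v).filter (fun u => p v u ≠ 0)).card = 0 := by
            refine Finset.sum_eq_zero fun v hv => ?_
            rw [Finset.card_eq_zero, ← Finset.not_nonempty_iff_eq_empty]
            exact Finset.not_nonempty_iff_eq_empty.mpr (hc v hv)
          omega
        obtain ⟨u₀, hu₀⟩ := hne
        have hu₀T : u₀ ∈ T v₀ := (Finset.mem_filter.mp hu₀).1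
        have hu₀ne : p v₀ u₀ ≠ 0 := (Finset.mem_filter.mp hu₀).2
        set p' : V → V → Fin q := fun v u => if u = u₀ then 0 else p v u with hp'
        have hsub : ∀ v, ((T v).filter (fun u => p' v u ≠ 0)) ⊆
            ((T v).filter (fun u => p v u ≠ 0)) := by
          intro v u hu
          rcases Finset.mem_filter.mp hu with ⟨h1, h2⟩
          refine Finset.mem_filter.mpr ⟨h1, ?_⟩
          by_cases huu : u = u₀
          · subst huu; simp [hp'] at h2
          · simpa [hp', huu] using h2
        have hstrict : ((T v₀).filter (fun u => p' v₀ u ≠ 0)).card <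
            ((T v₀).filter (fun u => p v₀ u ≠ 0)).card := by
          refine Finset.card_lt_card ?_
          refine Finset.ssubset_iff_of_subset (hsub v₀) |>.mpr ?_
          refine ⟨u₀, hu₀, ?_⟩
          simp [hp']
        have hmu : ∑ v ∈ P, ((T v).filter (fun u => p' v u ≠ 0)).card ≤ n := by
          have hlt : ∑ v ∈ P, ((T v).filter (fun u => p' v u ≠ 0)).card <
              ∑ v ∈ P, ((T v).filter (fun u => p v u ≠ 0)).card := by
            exact Finset.sum_lt_sum (fun v _ => Finset.card_le_card (hsub v)) ⟨v₀, hv₀, hstrict⟩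
          omega
        exact le_trans (ih p' hmu) (badset_shift_le P T p u₀)

end Shift3

section Upper

variable {V : Type*} [Fintype V] [DecidableEq V] {q : ℕ}

lemma depends_only {A : Type*} (f : (V → A) → V → A) (v : V) (T : Finset V)
    (h : ∀ u ∉ T, ¬ arcCF f u v) :
    ∀ x y : V → A, (∀ u ∈ T, x u = y u) → f x v = f y v := by
  classical
  suffices H : ∀ (n : ℕ) (x y : V → A), (univ.filter (fun u => x u ≠ y u)).card ≤ n →
      (∀ u ∈ T, x u = y u) → f x v = f y v by
    intro x y hxy
    exact H _ x y le_rfl hxy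
  intro n
  induction n with
  | zero =>
      intro x y hc hxy
      have : x = y := by
        funext u
        by_contra hne
        have : u ∈ univ.filter (fun u => x u ≠ y u) := Finset.mem_filter.mpr ⟨Finset.mem_univ _, hne⟩
        have := Finset.card_pos.mpr ⟨u, this⟩
        omega
      rw [this]
  | succ n ih =>
      intro x y hc hxy
      by_cases hempty : (univ.filter (fun u => x u ≠ y u)) = ∅
      · have : x = y := by
          funext u
          by_contra hne
          have : u ∈ univ.filter (fun u => x u ≠ y u) :=
            Finset.mem_filter.mpr ⟨Finset.mem_univ _, hne⟩
          simp [hempty] at this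
        rw [this]
      · obtain ⟨u', hu'⟩ := Finset.nonempty_of_ne_empty hempty
        have hxu' : x u' ≠ y u' := (Finset.mem_filter.mp hu').2
        have hu'T : u' ∉ T := fun hT => hxu' (hxy u' hT)
        have harc := h u' hu'T
        simp only [arcCF, not_exists] at harc
        have hstep : f (Function.update x u' (y u')) v = f x v :=
          not_ne_iff.mp (harc x (y u'))
        set x' := Function.update x u' (y u') with hx'
        have hagree : ∀ u ∈ T, x' u = y u := by
          intro u hu
          have huu : u ≠ u' := fun h => hu'T (h ▸ hu)
          rw [hx', Function.update_of_ne huu]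
          exact hxy u hu
        have hcard : (univ.filter (fun u => x' u ≠ y u)).card ≤ n := by
          have hsub : (univ.filter (fun u => x' u ≠ y u)) ⊆
              (univ.filter (fun u => x u ≠ y u)).erase u' := by
            intro u hu
            rcases Finset.mem_filter.mp hu with ⟨_, hne⟩
            have huu : u ≠ u' := by
              rintro rfl
              rw [hx'] at hne
              simp at hne
            refine Finset.mem_erase.mpr ⟨huu, Finset.mem_filter.mpr ⟨Finset.mem_univ _, ?_⟩⟩
            rwa [hx', Function.update_of_ne huu] at hne
          calc (univ.filter (fun u => x' u ≠ y u)).card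
              ≤ ((univ.filter (fun u => x u ≠ y u)).erase u').card := Finset.card_le_card hsub
            _ = (univ.filter (fun u => x u ≠ y u)).card - 1 := Finset.card_erase_of_mem hu'
            _ ≤ n := by omega
        rw [← hstep]
        exact ih x' y hcard hagree

end Upper

section Upper2

variable {V : Type*} [Fintype V] [DecidableEq V] {q : ℕ}

open Classical in
lemma fix_card_le [NeZero q] (G : V → V → Prop) (hG : ∀ v, ¬ G v v)
    (f : (V → Fin q) → V → Fin q) (hf : ∀ u i, arcCF f u i ↔ (G u i ∨ u = i)) :
    (univ.filter fun x => f x = x).card ≤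
    (univ.filter fun x : V → Fin q =>
      ∀ v, (∃ u, G u v) → ∃ u ∈ insert v (univ.filter fun u => G u v), x u ≠ 0).card := by
  classical
  set P : Finset V := univ.filter (fun v => ∃ u, G u v) with hP
  set T : V → Finset V := fun v => insert v (univ.filter fun u => G u v) with hT
  -- each vertex with an in-neighbour has a "bad pattern"
  have hbad : ∀ v ∈ P, ∃ x₀ : V → Fin q, f x₀ v ≠ x₀ v := by
    intro v hv
    obtain ⟨u, hu⟩ : ∃ u, G u v := by simpa [hP] using hv
    by_contra hc
    push_neg at hc
    have harc : arcCF f u v := (hf u v).mpr (Or.inl hu)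
    obtain ⟨x, a, hx⟩ := harc
    have huv : u ≠ v := fun h => hG v (h ▸ hu)
    apply hx
    rw [hc (Function.update x u a), hc x]
    exact Function.update_of_ne (Ne.symm huv) a x
  set p : V → V → Fin q := fun v =>
    if h : ∃ x₀ : V → Fin q, f x₀ v ≠ x₀ v then Classical.choose h else fun _ => 0 with hp
  have hpspec : ∀ v ∈ P, f (p v) v ≠ p v v := by
    intro v hv
    obtain h := hbad v hv
    simp only [hp, dif_pos h]
    exact Classical.choose_spec h
  -- fixed points avoid all pattern constraints
  have hsub : (univ.filter fun x => f x = x) ⊆ univ \ BadSet P T p := by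
    intro x hx
    have hfx : f x = x := (Finset.mem_filter.mp hx).2
    rw [Finset.mem_sdiff]
    refine ⟨Finset.mem_univ _, ?_⟩
    intro hbadx
    simp only [BadSet, Finset.mem_filter, Finset.mem_univ, true_and] at hbadx
    obtain ⟨v, hv, hag⟩ := hbadx
    -- f _ v depends only on coordinates in T v
    have hdep : ∀ u ∉ T v, ¬ arcCF f u v := by
      intro u hu harc
      rcases (hf u v).mp harc with h | h
      · exact hu (by simp [hT, h])
      · exact hu (by simp [hT, h])
    have hthis := depends_only f v (T v) hdep x (p v) hag
    have hfxv : f x v = x v := by rw [hfx]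
    have hxv : x v = p v v := hag v (by simp [hT])
    exact hpspec v hv (by rw [← hthis, hfxv, hxv])
  have hcard1 : (univ.filter fun x => f x = x).card ≤
      Fintype.card (V → Fin q) - (BadSet P T p).card := by
    calc (univ.filter fun x => f x = x).card ≤ (univ \ BadSet P T p).card :=
          Finset.card_le_card hsub
      _ = Fintype.card (V → Fin q) - (BadSet P T p).card := by
          rw [Finset.card_sdiff_of_subset (Finset.subset_univ _), Finset.card_univ]
  -- the good set is the complement of the zero bad set
  have hgood : (univ.filter fun x : V → Fin q =>
      ∀ v, (∃ u, G u v) → ∃ u ∈ insert v (univ.filter fun u => G u v), x u ≠ 0) =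
      univ \ BadSet P T (fun _ _ => (0 : Fin q)) := by
    ext x
    simp only [Finset.mem_filter, Finset.mem_univ, true_and, Finset.mem_sdiff, BadSet, hP, hT]
    constructor
    · intro h hbad0
      obtain ⟨v, hv, hag⟩ := hbad0
      obtain ⟨u, hu, hune⟩ := h v hv
      exact hune (hag u hu)
    · intro h v hv
      by_contra hc
      push_neg at hc
      exact h ⟨v, hv, hc⟩
  rw [hgood, Finset.card_sdiff_of_subset (Finset.subset_univ _), Finset.card_univ]
  have := badset_zero_le P T p
  omega

end Upper2

section Count

variable {V : Type*} [Fintype V] [DecidableEq V] {q : ℕ}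

open Classical in
lemma count_support [NeZero q] (X : Finset V) :
    (univ.filter fun x : V → Fin q => univ.filter (fun u => x u ≠ 0) = X).card
      = (q - 1) ^ X.card := by
  classical
  rw [← Fintype.card_subtype]
  have e1 : {x : V → Fin q // univ.filter (fun u => x u ≠ 0) = X} ≃
      {x : V → Fin q // ∀ u, (if u ∈ X then x u ≠ 0 else x u = 0)} := by
    apply Equiv.subtypeEquivRight
    intro x
    constructor
    · intro h u
      by_cases hu : u ∈ X
      · simp only [if_pos hu]
        rw [← h] at hu
        exact (Finset.mem_filter.mp hu).2
      · simp only [if_neg hu]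
        by_contra hne
        exact hu (h ▸ Finset.mem_filter.mpr ⟨Finset.mem_univ _, hne⟩)
    · intro h
      ext u
      simp only [Finset.mem_filter, Finset.mem_univ, true_and]
      constructor
      · intro hne
        by_contra hu
        exact hne (by simpa [if_neg hu] using h u)
      · intro hu
        simpa [if_pos hu] using h u
  have h2 : Fintype.card {x : V → Fin q // univ.filter (fun u => x u ≠ 0) = X}
      = Fintype.card (∀ u : V, {a : Fin q // if u ∈ X then a ≠ 0 else a = 0}) :=
    Fintype.card_congr (e1.trans (Equiv.subtypePiEquivPi (p := fun (u : V) (a : Fin q) => if u ∈ X then a ≠ 0 else a = 0)))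
  rw [h2, Fintype.card_pi]
  have : ∀ u : V, Fintype.card {a : Fin q // if u ∈ X then a ≠ 0 else a = 0}
      = if u ∈ X then q - 1 else 1 := by
    intro u
    by_cases hu : u ∈ X
    · have e : {a : Fin q // if u ∈ X then a ≠ 0 else a = 0} ≃ {a : Fin q // ¬ a = 0} :=
        Equiv.subtypeEquivRight (fun a => by simp [hu])
      have hcompl : Fintype.card {a : Fin q // ¬ a = 0} =
          Fintype.card (Fin q) - Fintype.card {a : Fin q // a = 0} :=
        Fintype.card_subtype_compl _
      rw [if_pos hu, Fintype.card_congr e, hcompl, Fintype.card_subtype_eq, Fintype.card_fin]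
    · have e : {a : Fin q // if u ∈ X then a ≠ 0 else a = 0} ≃ {a : Fin q // a = 0} :=
        Equiv.subtypeEquivRight (fun a => by simp [hu])
      rw [if_neg hu, Fintype.card_congr e, Fintype.card_subtype_eq]
  rw [Finset.prod_congr rfl (fun u _ => this u)]
  rw [← Finset.prod_filter (· ∈ X) (fun _ => q - 1), Finset.filter_univ_mem,
    Finset.prod_const]

open Classical in
lemma good_card [NeZero q] (G : V → V → Prop) :
    (univ.filter fun x : V → Fin q =>
      ∀ v, (∃ u, G u v) → ∃ u ∈ insert v (univ.filter fun u => G u v), x u ≠ 0).card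
    = ∑ k ∈ Finset.range (Fintype.card V + 1),
        (q - 1) ^ k * (univ.filter fun X : Finset V => IsIDS G X ∧ X.card = k).card := by
  classical
  have hmaps : ∀ x ∈ (univ.filter fun x : V → Fin q =>
      ∀ v, (∃ u, G u v) → ∃ u ∈ insert v (univ.filter fun u => G u v), x u ≠ 0),
      univ.filter (fun u => x u ≠ 0) ∈ univ.filter (fun X : Finset V => IsIDS G X) := by
    intro x hx
    simp only [Finset.mem_filter] at hx ⊢
    refine ⟨Finset.mem_univ _, fun v hv => ?_⟩
    obtain ⟨u, hu, hune⟩ := hx.2 v hv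
    rcases Finset.mem_insert.mp hu with rfl | hu
    · exact Or.inl (Finset.mem_filter.mpr ⟨Finset.mem_univ _, hune⟩)
    · exact Or.inr ⟨u, Finset.mem_filter.mpr ⟨Finset.mem_univ _, hune⟩,
        (Finset.mem_filter.mp hu).2⟩
  rw [Finset.card_eq_sum_card_fiberwise hmaps]
  -- each fiber has size (q-1)^|X|
  have hfiber : ∀ X ∈ univ.filter (fun X : Finset V => IsIDS G X),
      ((univ.filter fun x : V → Fin q =>
        ∀ v, (∃ u, G u v) → ∃ u ∈ insert v (univ.filter fun u => G u v), x u ≠ 0).filter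
        (fun x => univ.filter (fun u => x u ≠ 0) = X)).card = (q - 1) ^ X.card := by
    intro X hX
    have hIDS : IsIDS G X := (Finset.mem_filter.mp hX).2
    rw [← count_support X]
    congr 1
    ext x
    simp only [Finset.mem_filter, Finset.mem_univ, true_and]
    constructor
    · rintro ⟨_, h⟩; exact h
    · intro h
      refine ⟨fun v hv => ?_, h⟩
      rcases hIDS v hv with hvX | ⟨u, huX, hGu⟩
      · rw [← h] at hvX
        exact ⟨v, Finset.mem_insert_self _ _, (Finset.mem_filter.mp hvX).2⟩
      · rw [← h] at huX
        exact ⟨u, Finset.mem_insert.mpr (Or.inr (Finset.mem_filter.mpr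
          ⟨Finset.mem_univ _, hGu⟩)), (Finset.mem_filter.mp huX).2⟩
  rw [Finset.sum_congr rfl hfiber]
  -- group by cardinality
  rw [← Finset.sum_fiberwise_of_maps_to (t := Finset.range (Fintype.card V + 1))
    (g := fun X : Finset V => X.card)
    (fun X _ => Finset.mem_range.mpr (Nat.lt_succ_of_le (Finset.card_le_univ X)))
    (fun X => (q - 1) ^ X.card)]
  refine Finset.sum_congr rfl fun k _ => ?_
  rw [Finset.filter_filter]
  calc ∑ X ∈ univ.filter (fun X : Finset V => IsIDS G X ∧ X.card = k), (q - 1) ^ X.card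
      = ∑ _X ∈ univ.filter (fun X : Finset V => IsIDS G X ∧ X.card = k), (q - 1) ^ k := by
        refine Finset.sum_congr rfl fun X hX => by rw [(Finset.mem_filter.mp hX).2.2]
    _ = (q - 1) ^ k * (univ.filter fun X : Finset V => IsIDS G X ∧ X.card = k).card := by
        rw [Finset.sum_const, smul_eq_mul, mul_comm]

end Count

section Con

variable {V : Type*} [Fintype V] [DecidableEq V]

open Classical in
noncomputable def fCon (G : V → V → Prop) (q : ℕ) [NeZero q] : (V → Fin q) → V → Fin q :=
  fun x v => if (∃ u, G u v) ∧ x v = 0 ∧ (∀ u, G u v → x u = 0) then 1 else x v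

variable {q : ℕ} [NeZero q]

lemma one_ne_zero_fin (hq : 2 ≤ q) : (1 : Fin q) ≠ 0 := by
  intro h
  have h2 := congrArg Fin.val h
  rw [Fin.val_one', Fin.val_zero] at h2
  have h1q : 1 % q = 1 := Nat.mod_eq_of_lt (by omega)
  omega

open Classical in
lemma fCon_arcs (G : V → V → Prop) (hG : ∀ v, ¬ G v v) (hq : 2 ≤ q) :
    ∀ u i, arcCF (fCon G q) u i ↔ (G u i ∨ u = i) := by
  have h10 := one_ne_zero_fin (q := q) hq
  intro u i
  constructor
  · -- no arcs beyond G°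
    intro harc
    by_contra hcon
    push_neg at hcon
    obtain ⟨hGui, hui⟩ := hcon
    obtain ⟨x, a, hx⟩ := harc
    apply hx
    have hC : ((∃ w, G w i) ∧ Function.update x u a i = 0 ∧
        (∀ w, G w i → Function.update x u a w = 0)) ↔
        ((∃ w, G w i) ∧ x i = 0 ∧ (∀ w, G w i → x w = 0)) := by
      constructor
      · rintro ⟨he, h0, hall⟩
        rw [Function.update_of_ne (Ne.symm hui)] at h0
        refine ⟨he, h0, fun w hw => ?_⟩
        have hwu : w ≠ u := fun h => hGui (h ▸ hw)
        have := hall w hw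
        rwa [Function.update_of_ne hwu] at this
      · rintro ⟨he, h0, hall⟩
        refine ⟨he, by rwa [Function.update_of_ne (Ne.symm hui)], fun w hw => ?_⟩
        have hwu : w ≠ u := fun h => hGui (h ▸ hw)
        rw [Function.update_of_ne hwu]
        exact hall w hw
    unfold fCon
    by_cases hC2 : (∃ w, G w i) ∧ x i = 0 ∧ (∀ w, G w i → x w = 0)
    · rw [if_pos (hC.mpr hC2), if_pos hC2]
    · rw [if_neg (fun h => hC2 (hC.mp h)), if_neg hC2]
      exact Function.update_of_ne (Ne.symm hui) a x
  · rintro (hGui | rfl)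
    · -- a G-arc
      have hui : u ≠ i := fun h => hG i (h ▸ hGui)
      refine ⟨fun _ => 0, 1, ?_⟩
      have h1 : fCon G q (fun _ => (0 : Fin q)) i = 1 := by
        unfold fCon
        rw [if_pos ⟨⟨u, hGui⟩, rfl, fun _ _ => rfl⟩]
      have h2 : fCon G q (Function.update (fun _ => (0 : Fin q)) u 1) i = 0 := by
        unfold fCon
        rw [if_neg, Function.update_of_ne (Ne.symm hui)]
        rintro ⟨_, _, hall⟩
        have := hall u hGui
        rw [Function.update_self] at this
        exact h10 this
      rw [h1, h2]
      exact fun h => h10 h.symm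
    · -- the loop
      by_cases hP : ∃ w, G w u
      · obtain ⟨w, hw⟩ := hP
        have hwu : w ≠ u := fun h => hG u (h ▸ hw)
        set x : V → Fin q := Function.update (fun _ => (0 : Fin q)) w 1 with hxdef
        have hxw : x w = 1 := Function.update_self _ _ _
        refine ⟨x, 1, ?_⟩
        have hnC : ∀ y : V → Fin q, y w = 1 → ¬ ((∃ z, G z u) ∧ y u = 0 ∧
            (∀ z, G z u → y z = 0)) := by
          rintro y hy ⟨_, _, hall⟩
          exact h10 (hy ▸ hall w hw)
        have h1 : fCon G q x u = 0 := by
          unfold fCon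
          rw [if_neg (hnC x hxw), hxdef, Function.update_of_ne (Ne.symm hwu)]
        have h2 : fCon G q (Function.update x u 1) u = 1 := by
          unfold fCon
          rw [if_neg (hnC _ (by rw [Function.update_of_ne hwu]; exact hxw)),
            Function.update_self]
        rw [h1, h2]
        exact fun h => h10 h
      · refine ⟨fun _ => 0, 1, ?_⟩
        have h1 : fCon G q (fun _ => (0 : Fin q)) u = 0 := by
          unfold fCon
          rw [if_neg (fun h => hP h.1)]
        have h2 : fCon G q (Function.update (fun _ => (0 : Fin q)) u 1) u = 1 := by
          unfold fCon
          rw [if_neg (fun h => hP h.1), Function.update_self]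
        rw [h1, h2]
        exact fun h => h10 h

open Classical in
lemma fCon_fix (G : V → V → Prop) (hq : 2 ≤ q) :
    (univ.filter fun x => fCon G q x = x) =
    (univ.filter fun x : V → Fin q =>
      ∀ v, (∃ u, G u v) → ∃ u ∈ insert v (univ.filter fun u => G u v), x u ≠ 0) := by
  have h10 := one_ne_zero_fin (q := q) hq
  ext x
  simp only [Finset.mem_filter, Finset.mem_univ, true_and]
  rw [funext_iff]
  constructor
  · intro h v hv
    by_contra hc
    push_neg at hc
    have hxv : x v = 0 := hc v (Finset.mem_insert_self _ _)
    have hall : ∀ u, G u v → x u = 0 := fun u hu =>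
      hc u (Finset.mem_insert.mpr (Or.inr (Finset.mem_filter.mpr ⟨Finset.mem_univ _, hu⟩)))
    have := h v
    unfold fCon at this
    rw [if_pos ⟨hv, hxv, hall⟩] at this
    exact h10 (this.trans hxv)
  · intro h v
    unfold fCon
    rw [if_neg]
    rintro ⟨hv, hxv, hall⟩
    obtain ⟨u, hu, hune⟩ := h v hv
    rcases Finset.mem_insert.mp hu with rfl | hu
    · exact hune hxv
    · exact hune (hall u (Finset.mem_filter.mp hu).2)

end Con


section Main

lemma ncard_setOf_eq_filter {α : Type*} [Fintype α] (p : α → Prop) [DecidablePred p] :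
    Set.ncard {x | p x} = (univ.filter p).card := by
  rw [← Set.ncard_coe_finset]
  congr 1
  ext x
  simp

/-- Let `G` be a loopless digraph on `n` vertices and `G°` be `G` with a loop added
on every vertex.  For every `q ≥ 2`, the maximum number of fixed points over all
coding functions over an alphabet of size `q` with interaction graph exactly `G°`
equals `Σ_{k=0}^{n} (q−1)^k · I_k(G)`, where `I_k(G)` is the number of
in-dominating sets of `G` of size `k`; that is, `h(G°,q)` is the `log_q` of this sum. -/
theorem stmt14 {V : Type*} [Fintype V] [DecidableEq V] (G : V → V → Prop)
    (hG : ∀ v, ¬ G v v) (q : ℕ) (hq : 2 ≤ q) :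
    sSup {n : ℕ | ∃ f : (V → Fin q) → V → Fin q,
        (∀ u i, arcCF f u i ↔ (G u i ∨ u = i)) ∧ n = Set.ncard {x | f x = x}} =
      ∑ k ∈ Finset.range (Fintype.card V + 1),
        (q - 1) ^ k * Set.ncard {X : Finset V | IsIDS G X ∧ X.card = k} := by
  classical
  haveI : NeZero q := ⟨by omega⟩
  set S : Set ℕ := {n : ℕ | ∃ f : (V → Fin q) → V → Fin q,
      (∀ u i, arcCF f u i ↔ (G u i ∨ u = i)) ∧ n = Set.ncard {x | f x = x}} with hS
  set N : ℕ := ∑ k ∈ Finset.range (Fintype.card V + 1),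
      (q - 1) ^ k * (univ.filter fun X : Finset V => IsIDS G X ∧ X.card = k).card with hN
  have hRHS : ∑ k ∈ Finset.range (Fintype.card V + 1),
      (q - 1) ^ k * Set.ncard {X : Finset V | IsIDS G X ∧ X.card = k} = N := by
    refine Finset.sum_congr rfl fun k _ => ?_
    rw [ncard_setOf_eq_filter]
  have hNmem : N ∈ S := by
    refine ⟨fCon G q, fCon_arcs G hG hq, ?_⟩
    rw [ncard_setOf_eq_filter, fCon_fix G hq, good_card G]
  have hub : ∀ n ∈ S, n ≤ N := by
    rintro n ⟨f, harcs, rfl⟩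
    rw [ncard_setOf_eq_filter]
    calc (univ.filter fun x => f x = x).card
        ≤ (univ.filter fun x : V → Fin q =>
            ∀ v, (∃ u, G u v) → ∃ u ∈ insert v (univ.filter fun u => G u v), x u ≠ 0).card :=
          fix_card_le G hG f harcs
      _ = N := good_card G
  rw [hRHS]
  exact le_antisymm (csSup_le ⟨N, hNmem⟩ hub) (le_csSup ⟨N, fun n hn => hub n hn⟩ hNmem)

end Main
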